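/- (Lemma 3, non-blocking case) For indices 1 ≤ i < j ≤ n+1 define the minisum 1-sink cost OPT(i, j) as the minimum over x ∈ [v_i, v_{j−1}] of Σ_{l=i}^{j−1} w_l·τ·|x − v_l|. Then for any integers i and j with 1 ≤ i+1 < j ≤ n, the concave Monge property holds: OPT(i, j) + OPT(i+1, j+1) ≤ OPT(i+1, j) + OPT(i, j+1). -/

import Mathlib

open Finset

/-- Minisum 1-sink cost (non-blocking case) of the vertex interval [v_i, v_(j-1)]:
the minimum over x ∈ [v_i, v_(j-1)] of Σ_(l=i)^(j-1) w_l·τ·|x - v_l|. -/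
noncomputable def OPTms (v w : ℕ → ℝ) (τ : ℝ) (i j : ℕ) : ℝ :=
  sInf ((fun x => ∑ l ∈ Finset.Icc i (j - 1), w l * τ * |x - v l|) ''
    Set.Icc (v i) (v (j - 1)))

/-- Lemma 3, non-blocking case: the minisum 1-sink costs satisfy the
concave Monge property: OPT(i,j) + OPT(i+1,j+1) ≤ OPT(i+1,j) + OPT(i,j+1). -/
theorem stmt15 (n : ℕ) (v w : ℕ → ℝ) (τ : ℝ) (i j : ℕ)
    (hi : 1 ≤ i) (hij : i + 1 < j) (hjn : j ≤ n)
    (hv1 : v 1 = 0) (hv : StrictMonoOn v (Set.Icc 1 n))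
    (hw : ∀ h, 1 ≤ h → h ≤ n → 0 < w h) (hτ : 0 < τ) :
    OPTms v w τ i j + OPTms v w τ (i + 1) (j + 1) ≤
      OPTms v w τ (i + 1) j + OPTms v w τ i (j + 1) := by
  have hmono := hv.monotoneOn
  set g : ℕ → ℝ → ℝ := fun l x => w l * τ * |x - v l| with hg
  have hgnn : ∀ l x, 1 ≤ l → l ≤ n → 0 ≤ g l x := fun l x h1 h2 =>
    mul_nonneg (mul_nonneg (hw l h1 h2).le hτ.le) (abs_nonneg _)
  -- index facts
  have hi1n : i + 1 ∈ Set.Icc 1 n := ⟨by omega, by omega⟩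
  have hin : i ∈ Set.Icc 1 n := ⟨by omega, by omega⟩
  have hj1n : j - 1 ∈ Set.Icc 1 n := ⟨by omega, by omega⟩
  have hjn' : j ∈ Set.Icc 1 n := ⟨by omega, by omega⟩
  have hvi1 : v i ≤ v (i + 1) := hmono hin hi1n (by omega)
  have hvj1 : v (j - 1) ≤ v j := hmono hj1n hjn' (by omega)
  have hvij : v (i + 1) ≤ v (j - 1) := hmono hi1n hj1n (by omega)
  -- sum decompositions
  set s : Finset ℕ := Finset.Icc (i + 1) (j - 1) with hs
  have hins : i ∉ s := by simp [hs, Finset.mem_Icc]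
  have hjns : j ∉ s := by simp [hs, Finset.mem_Icc]; omega
  have e1 : Finset.Icc i (j - 1) = insert i s := by
    ext l; simp [hs, Finset.mem_Icc]; omega
  have e2 : Finset.Icc (i + 1) j = insert j s := by
    ext l; simp [hs, Finset.mem_Icc]; omega
  have e3 : Finset.Icc i j = insert i (insert j s) := by
    ext l; simp [hs, Finset.mem_Icc]; omega
  set F : ℝ → ℝ := fun x => ∑ l ∈ s, g l x with hF
  have hFC : ∀ x : ℝ, ∑ l ∈ Finset.Icc i (j - 1), g l x = g i x + F x := fun x => by
    rw [e1, Finset.sum_insert hins]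
  have hFD : ∀ x : ℝ, ∑ l ∈ Finset.Icc (i + 1) j, g l x = g j x + F x := fun x => by
    rw [e2, Finset.sum_insert hjns]
  have hFB : ∀ x : ℝ, ∑ l ∈ Finset.Icc i j, g l x = g i x + (g j x + F x) := fun x => by
    rw [e3, Finset.sum_insert, Finset.sum_insert hjns]
    simp [Finset.mem_insert, hins]; omega
  -- the four sets
  set C : Set ℝ := (fun x => ∑ l ∈ Finset.Icc i (j - 1), g l x) '' Set.Icc (v i) (v (j - 1))
    with hC
  set D : Set ℝ := (fun x => ∑ l ∈ Finset.Icc (i + 1) j, g l x) '' Set.Icc (v (i + 1)) (v j)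
    with hD
  set A : Set ℝ := (fun x => ∑ l ∈ Finset.Icc (i + 1) (j - 1), g l x) ''
    Set.Icc (v (i + 1)) (v (j - 1)) with hA
  set B : Set ℝ := (fun x => ∑ l ∈ Finset.Icc i j, g l x) '' Set.Icc (v i) (v j) with hB
  have hsub : ∀ l ∈ Finset.Icc i j, 1 ≤ l ∧ l ≤ n := fun l hl => by
    simp [Finset.mem_Icc] at hl; omega
  have sumnn : ∀ (t : Finset ℕ), t ⊆ Finset.Icc i j → ∀ x : ℝ, 0 ≤ ∑ l ∈ t, g l x :=
    fun t ht x => Finset.sum_nonneg fun l hl =>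
      hgnn l x (hsub l (ht hl)).1 (hsub l (ht hl)).2
  have hbddC : BddBelow C := ⟨0, fun z ⟨x, _, hx⟩ => hx ▸
    sumnn _ (Finset.Icc_subset_Icc le_rfl (by omega)) x⟩
  have hbddD : BddBelow D := ⟨0, fun z ⟨x, _, hx⟩ => hx ▸
    sumnn _ (Finset.Icc_subset_Icc (by omega) le_rfl) x⟩
  have hbddA : BddBelow A := ⟨0, fun z ⟨x, _, hx⟩ => hx ▸
    sumnn _ (Finset.Icc_subset_Icc (by omega) (by omega)) x⟩
  have hbddB : BddBelow B := ⟨0, fun z ⟨x, _, hx⟩ => hx ▸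
    sumnn _ (Finset.Icc_subset_Icc le_rfl le_rfl) x⟩
  have hAne : A.Nonempty := ⟨_, ⟨v (i + 1), ⟨le_rfl, hvij⟩, rfl⟩⟩
  have hBne : B.Nonempty := ⟨_, ⟨v i, ⟨le_rfl, by linarith⟩, rfl⟩⟩
  -- rewrite the OPTms values
  have oC : OPTms v w τ i j = sInf C := rfl
  have oA : OPTms v w τ (i + 1) j = sInf A := rfl
  have oD : OPTms v w τ (i + 1) (j + 1) = sInf D := by
    simp only [OPTms, Nat.add_sub_cancel]
    rfl
  have oB : OPTms v w τ i (j + 1) = sInf B := by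
    simp only [OPTms, Nat.add_sub_cancel]
    rfl
  rw [oC, oA, oD, oB]
  -- key pointwise inequality
  have key : ∀ x ∈ Set.Icc (v (i + 1)) (v (j - 1)), ∀ y ∈ Set.Icc (v i) (v j),
      sInf C + sInf D ≤ (∑ l ∈ Finset.Icc (i + 1) (j - 1), g l x) +
        ∑ l ∈ Finset.Icc i j, g l y := by
    rintro x ⟨hx1, hx2⟩ y ⟨hy1, hy2⟩
    have hwτi : (0:ℝ) ≤ w i * τ := mul_nonneg (hw i hin.1 hin.2).le hτ.le
    have hwτj : (0:ℝ) ≤ w j * τ := mul_nonneg (hw j hjn'.1 hjn'.2).le hτ.le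
    rcases le_total x y with hxy | hxy
    · -- a = x in C-domain, b = y in D-domain
      have hCx : sInf C ≤ ∑ l ∈ Finset.Icc i (j - 1), g l x := by
        refine csInf_le hbddC ⟨x, ?_, rfl⟩
        exact ⟨by linarith, hx2⟩
      have hDy : sInf D ≤ ∑ l ∈ Finset.Icc (i + 1) j, g l y := by
        refine csInf_le hbddD ⟨y, ?_, rfl⟩
        exact ⟨by linarith, hy2⟩
      have hgix : g i x ≤ g i y := by
        have h1 : |x - v i| = x - v i := abs_of_nonneg (by linarith)
        have h2 : |y - v i| = y - v i := abs_of_nonneg (by linarith)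
        simp only [hg, h1, h2]
        nlinarith
      have e1' := hFC x; have e2' := hFD y; have e3' := hFB y
      linarith
    · -- a = y in C-domain, b = x in D-domain
      have hCy : sInf C ≤ ∑ l ∈ Finset.Icc i (j - 1), g l y := by
        refine csInf_le hbddC ⟨y, ?_, rfl⟩
        exact ⟨hy1, by linarith⟩
      have hDx : sInf D ≤ ∑ l ∈ Finset.Icc (i + 1) j, g l x := by
        refine csInf_le hbddD ⟨x, ?_, rfl⟩
        exact ⟨hx1, by linarith⟩
      have hgjx : g j x ≤ g j y := by
        have h1 : |x - v j| = v j - x := by rw [abs_sub_comm]; exact abs_of_nonneg (by linarith)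
        have h2 : |y - v j| = v j - y := by rw [abs_sub_comm]; exact abs_of_nonneg (by linarith)
        simp only [hg, h1, h2]
        nlinarith
      have e1' := hFC y; have e2' := hFD x; have e3' := hFB y
      linarith
  have main : ∀ a ∈ A, ∀ b ∈ B, sInf C + sInf D ≤ a + b := by
    rintro a ⟨x, hx, rfl⟩ b ⟨y, hy, rfl⟩
    exact key x hx y hy
  have h1 : sInf C + sInf D - sInf B ≤ sInf A := by
    apply le_csInf hAne
    intro a ha
    have h2 : sInf C + sInf D - a ≤ sInf B := by
      apply le_csInf hBne
      intro b hb
      linarith [main a ha b hb]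
    linarith
  linarith
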